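/- arXiv:2308.01296 — 2 statements merged into one kernel-verified Lean document; each statement's English description precedes it below -/
import Mathlib

section
/- (HieAvg global-aggregation estimation error bound.) Let N be a positive natural number and let the index set Fin N be partitioned into a set 𝕄 of in-time edge servers and a set 𝕊 of stragglers. Let p : Fin N → ℝ satisfy p(i) ≥ 0 for all i and Σ_{i∈Fin N} p(i) = 1. For each i ∈ Fin N let w(i) ∈ EuclideanSpace ℝ (Fin n) be its true current edge model. For each straggler s ∈ 𝕊, let w'(s) be its previous-round edge model, Δ(s) the average of its historical weight differences, γ(s) ∈ [0,1] a decay factor, and δ(s) ≥ 0 a real with ‖(w(s) − w'(s)) − Δ(s)‖ ≤ δ(s). Define ŵ(s) := w'(s) + Δ(s) and the HieAvg global aggregate w̄ := Σ_{m∈𝕄} p(m)·w(m) + Σ_{s∈𝕊} p(s)·γ(s)·ŵ(s). Then ‖w̄ − Σ_{i∈Fin N} p(i)·w(i)‖ ≤ Σ_{s∈𝕊} p(s)·(δ(s) + (1 − γ(s))·‖ŵ(s)‖). -/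
/-- HieAvg global-aggregation estimation error bound: with aggregation weights
`p i ≥ 0` summing to 1, replacing each straggler edge server's model by the
decayed estimate `γ s • (w' s + Δ s)` keeps the global aggregate within
`Σ_{s∈𝕊} p s · (δ s + (1 − γ s)·‖w' s + Δ s‖)` of the ideal weighted average. -/
theorem hieavg_global_aggregation_error
    (n N : ℕ) (hN : 0 < N)
    (M S : Finset (Fin N)) (hdisj : Disjoint M S) (hunion : M ∪ S = Finset.univ)
    (p : Fin N → ℝ) (hp : ∀ i, 0 ≤ p i) (hpsum : ∑ i : Fin N, p i = 1)
    (w w' Δ : Fin N → EuclideanSpace ℝ (Fin n))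
    (γ δ : Fin N → ℝ)
    (hγ : ∀ s ∈ S, γ s ∈ Set.Icc (0 : ℝ) 1)
    (hδ : ∀ s ∈ S, 0 ≤ δ s)
    (hvar : ∀ s ∈ S, ‖(w s - w' s) - Δ s‖ ≤ δ s) :
    ‖(∑ m ∈ M, p m • w m + ∑ s ∈ S, (p s * γ s) • (w' s + Δ s))
        - ∑ i : Fin N, p i • w i‖ ≤
      ∑ s ∈ S, p s * (δ s + (1 - γ s) * ‖w' s + Δ s‖) := by
  have hsplit : ∑ i : Fin N, p i • w i
      = ∑ m ∈ M, p m • w m + ∑ s ∈ S, p s • w s := by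
    rw [← Finset.sum_union hdisj, hunion]
  rw [hsplit]
  have hkey : (∑ m ∈ M, p m • w m + ∑ s ∈ S, (p s * γ s) • (w' s + Δ s))
      - (∑ m ∈ M, p m • w m + ∑ s ∈ S, p s • w s)
      = ∑ s ∈ S, ((p s * γ s) • (w' s + Δ s) - p s • w s) := by
    rw [Finset.sum_sub_distrib]; abel
  rw [hkey]
  refine (norm_sum_le _ _).trans (Finset.sum_le_sum fun s hs => ?_)
  obtain ⟨hγ0, hγ1⟩ := hγ s hs
  have heq : (p s * γ s) • (w' s + Δ s) - p s • w s
      = p s • (((w' s + Δ s) - w s) - (1 - γ s) • (w' s + Δ s)) := by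
    module
  rw [heq, norm_smul, Real.norm_eq_abs, abs_of_nonneg (hp s)]
  refine mul_le_mul_of_nonneg_left ?_ (hp s)
  refine (norm_sub_le _ _).trans ?_
  have h1 : ‖(w' s + Δ s) - w s‖ ≤ δ s := by
    have h : w' s + Δ s - w s = -(w s - w' s - Δ s) := by abel
    rw [h, norm_neg]; exact hvar s hs
  have h2 : ‖(1 - γ s) • (w' s + Δ s)‖ = (1 - γ s) * ‖w' s + Δ s‖ := by
    rw [norm_smul, Real.norm_eq_abs, abs_of_nonneg (by linarith)]
  linarith
end

section
/- (Descent under an additive update perturbation.) Let F : EuclideanSpace ℝ (Fin n) → ℝ be differentiable with gradient Lipschitz with constant L ≥ 0, let η > 0, ε ≥ 0, and let w, e ∈ EuclideanSpace ℝ (Fin n) satisfy ‖e‖ ≤ ε. Then F(w − η·∇F(w) + e) ≤ F(w) − (η/2)·(1 − 2Lη)·‖∇F(w)‖² + (1/(2η) + L)·ε². -/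
open InnerProductSpace intervalIntegral

section aux

variable {H : Type*} [NormedAddCommGroup H] [InnerProductSpace ℝ H] [CompleteSpace H]

lemma fderiv_apply_eq_inner_gradient (F : H → ℝ) (x v : H) :
    fderiv ℝ F x v = inner ℝ (gradient F x) v := by
  simp [gradient, InnerProductSpace.toDual_symm_apply]

/-- The classical descent lemma. -/
lemma descent_lemma (F : H → ℝ) (hF : Differentiable ℝ F) (L : ℝ) (hL : 0 ≤ L)
    (hlip : LipschitzWith L.toNNReal (fun w => gradient F w)) (x v : H) :
    F (x + v) ≤ F x + inner ℝ (gradient F x) v + L / 2 * ‖v‖ ^ 2 := by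
  set g : ℝ → ℝ := fun t => F (x + t • v) with hg
  have hline : ∀ t : ℝ, HasDerivAt (fun t : ℝ => x + t • v) v t := by
    intro t
    simpa using ((hasDerivAt_id t).smul_const v).const_add x
  have hgrad_cont : Continuous fun w => gradient F w := hlip.continuous
  have hderiv : ∀ t : ℝ, HasDerivAt g (inner ℝ (gradient F (x + t • v)) v : ℝ) t := by
    intro t
    have h1 := ((hF (x + t • v)).hasFDerivAt).comp_hasDerivAt t (hline t)
    rw [← fderiv_apply_eq_inner_gradient]; exact h1
  have hcont : Continuous fun t : ℝ => (inner ℝ (gradient F (x + t • v)) v : ℝ) := by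
    exact (hgrad_cont.comp (by continuity)).inner continuous_const
  have hFTC : F (x + v) - F x = ∫ t in (0:ℝ)..1,
      (inner ℝ (gradient F (x + t • v)) v : ℝ) := by
    have := intervalIntegral.integral_eq_sub_of_hasDerivAt
      (f := g) (f' := fun t => (inner ℝ (gradient F (x + t • v)) v : ℝ))
      (fun t _ => hderiv t) (hcont.intervalIntegrable 0 1)
    simpa [hg] using this.symm
  have hbound : ∀ t ∈ Set.Icc (0:ℝ) 1,
      (inner ℝ (gradient F (x + t • v)) v : ℝ) ≤
        inner ℝ (gradient F x) v + L * t * ‖v‖ ^ 2 := by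
    intro t ht
    have h1 : (inner ℝ (gradient F (x + t • v)) v : ℝ) - inner ℝ (gradient F x) v
        = inner ℝ (gradient F (x + t • v) - gradient F x) v := by
      rw [inner_sub_left]
    have h2 : (inner ℝ (gradient F (x + t • v) - gradient F x) v : ℝ)
        ≤ ‖gradient F (x + t • v) - gradient F x‖ * ‖v‖ :=
      real_inner_le_norm _ _
    have h3 : ‖gradient F (x + t • v) - gradient F x‖ ≤ L * (t * ‖v‖) := by
      have := hlip.dist_le_mul (x + t • v) x
      rw [dist_eq_norm] at this
      have hcoe : (L.toNNReal : ℝ) = L := Real.coe_toNNReal L hL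
      calc ‖gradient F (x + t • v) - gradient F x‖
          ≤ L * dist (x + t • v) x := by rw [← hcoe]; exact this
        _ = L * (t * ‖v‖) := by
            rw [dist_eq_norm]
            congr 1
            rw [add_sub_cancel_left, norm_smul, Real.norm_eq_abs, abs_of_nonneg ht.1]
    nlinarith [norm_nonneg v, mul_le_mul_of_nonneg_right h3 (norm_nonneg v)]
  have hint : (∫ t in (0:ℝ)..1, (inner ℝ (gradient F (x + t • v)) v : ℝ))
      ≤ ∫ t in (0:ℝ)..1, (inner ℝ (gradient F x) v + L * t * ‖v‖ ^ 2) := by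
    apply intervalIntegral.integral_mono_on zero_le_one
      (hcont.intervalIntegrable 0 1)
      (by apply Continuous.intervalIntegrable; continuity)
    exact hbound
  have hval : (∫ t in (0:ℝ)..1, (inner ℝ (gradient F x) v + L * t * ‖v‖ ^ 2))
      = inner ℝ (gradient F x) v + L / 2 * ‖v‖ ^ 2 := by
    have h1 : (fun t : ℝ => (inner ℝ (gradient F x) v : ℝ) + L * t * ‖v‖ ^ 2)
        = fun t : ℝ => (inner ℝ (gradient F x) v : ℝ) + (L * ‖v‖ ^ 2) * t := by
      funext t; ring
    rw [show (∫ t in (0:ℝ)..1, ((inner ℝ (gradient F x) v : ℝ) + L * t * ‖v‖ ^ 2))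
        = ∫ t in (0:ℝ)..1, ((inner ℝ (gradient F x) v : ℝ) + (L * ‖v‖ ^ 2) * t) from by rw [h1],
      intervalIntegral.integral_add (intervalIntegrable_const)
        (((by fun_prop) :
          Continuous fun t : ℝ => (L * ‖v‖ ^ 2) * t).intervalIntegrable 0 1),
      intervalIntegral.integral_const_mul, integral_id, intervalIntegral.integral_const]
    simp
    ring
  linarith [hFTC ▸ (hval ▸ hint)]

end aux

/-- Descent under an additive update perturbation: one perturbed gradient step
`w - η • ∇F(w) + e` with `‖e‖ ≤ ε` descends up to an `ε²` error term. -/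
theorem descent_additive_perturbation
    (n : ℕ) (F : EuclideanSpace ℝ (Fin n) → ℝ)
    (hF : Differentiable ℝ F)
    (L : ℝ) (hL : 0 ≤ L)
    (hlip : LipschitzWith L.toNNReal (fun w => gradient F w))
    (η ε : ℝ) (hη : 0 < η) (hε : 0 ≤ ε)
    (w e : EuclideanSpace ℝ (Fin n))
    (he : ‖e‖ ≤ ε) :
    F (w - η • gradient F w + e) ≤
      F w - (η / 2) * (1 - 2 * L * η) * ‖gradient F w‖ ^ 2
        + (1 / (2 * η) + L) * ε ^ 2 := by
  set g := gradient F w with hg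
  set v := -η • g + e with hv
  have hstep : w - η • g + e = w + v := by rw [hv]; module
  have hdesc := descent_lemma F hF L hL hlip w v
  rw [hstep]
  have hinner : (inner ℝ g v : ℝ) = -η * ‖g‖ ^ 2 + inner ℝ g e := by
    rw [hv, inner_add_right, inner_smul_right, real_inner_self_eq_norm_sq]
    try ring
  have hge : (inner ℝ g e : ℝ) ≤ η / 2 * ‖g‖ ^ 2 + 1 / (2 * η) * ε ^ 2 := by
    have h1 : (inner ℝ g e : ℝ) ≤ ‖g‖ * ‖e‖ := real_inner_le_norm g e
    have h2η : (0:ℝ) < 2 * η := by linarith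
    have h2 : ‖g‖ * ‖e‖ ≤ η / 2 * ‖g‖ ^ 2 + 1 / (2 * η) * ‖e‖ ^ 2 := by
      have key : 2 * η * (‖g‖ * ‖e‖) ≤ 2 * η * (η / 2 * ‖g‖ ^ 2 + 1 / (2 * η) * ‖e‖ ^ 2) := by
        have e1 : 2 * η * (η / 2 * ‖g‖ ^ 2 + 1 / (2 * η) * ‖e‖ ^ 2)
            = η ^ 2 * ‖g‖ ^ 2 + ‖e‖ ^ 2 := by field_simp
        rw [e1]; nlinarith [sq_nonneg (η * ‖g‖ - ‖e‖)]
      exact le_of_mul_le_mul_left key h2η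
    have h3 : ‖e‖ ^ 2 ≤ ε ^ 2 := by nlinarith [norm_nonneg e]
    have : 1 / (2 * η) * ‖e‖ ^ 2 ≤ 1 / (2 * η) * ε ^ 2 := by
      apply mul_le_mul_of_nonneg_left h3; positivity
    linarith
  have hvnorm : ‖v‖ ^ 2 ≤ 2 * η ^ 2 * ‖g‖ ^ 2 + 2 * ε ^ 2 := by
    have h1 : ‖v‖ ≤ η * ‖g‖ + ε := by
      calc ‖v‖ ≤ ‖-η • g‖ + ‖e‖ := norm_add_le _ _
        _ = η * ‖g‖ + ‖e‖ := by
            simp [norm_smul, abs_of_pos hη]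
        _ ≤ η * ‖g‖ + ε := by linarith
    nlinarith [norm_nonneg v, norm_nonneg g, sq_nonneg (η * ‖g‖ - ε)]
  have hL2 : L / 2 * ‖v‖ ^ 2 ≤ L * η ^ 2 * ‖g‖ ^ 2 + L * ε ^ 2 := by
    nlinarith
  nlinarith [hdesc, hinner, hge, hL2]
end
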